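/- If p ∈ (0,1), z > 0, and q* ∈ (0,1) satisfies q* = 1 - (1-p)^{z q*}, then the derivative of f(q) = 1 - (1-p)^{z q} at q* is strictly less than 1 (and positive), so q* is a locally exponentially stable fixed point. -/

import Mathlib

/-- At a nonzero fixed point `q* ∈ (0,1)` of `f`, one has `0 < f'(q*) < 1`. -/
theorem stmt_5 (p z q : ℝ) (hp : p ∈ Set.Ioo (0:ℝ) 1) (hz : 0 < z)
    (hq : q ∈ Set.Ioo (0:ℝ) 1)
    (hfix : q = 1 - Real.exp (z * q * Real.log (1 - p))) :
    0 < deriv (fun q : ℝ => 1 - Real.exp (z * q * Real.log (1 - p))) q ∧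
    deriv (fun q : ℝ => 1 - Real.exp (z * q * Real.log (1 - p))) q < 1 := by
  obtain ⟨hp0, hp1⟩ := hp
  obtain ⟨hq0, hq1⟩ := hq
  set L := Real.log (1 - p) with hLdef
  have hL : L < 0 := Real.log_neg (by linarith) (by linarith)
  have hd : HasDerivAt (fun x : ℝ => 1 - Real.exp (z * x * L))
      (-(z * L * Real.exp (z * q * L))) q := by
    have h1 : HasDerivAt (fun x : ℝ => z * x * L) (z * L) q := by
      have h := (hasDerivAt_id q).const_mul (z * L)
      simp only [mul_one, id_eq] at h
      have heq : (fun x : ℝ => z * x * L) = fun x : ℝ => z * L * x := by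
        funext x; ring
      rw [heq]
      simpa using h
    have h2 := h1.exp
    have h3 := h2.const_sub 1
    refine h3.congr_deriv ?_
    ring
  rw [hd.deriv]
  have hE : Real.exp (z * q * L) = 1 - q := by linarith
  set t : ℝ := -(z * q * L) with htdef
  have ht : 0 < t := by
    have : z * q * L < 0 := mul_neg_of_pos_of_neg (by positivity) hL
    linarith
  have hexp : Real.exp (-t) = 1 - q := by
    rw [htdef, neg_neg]; exact hE
  have hkey : t + 1 < Real.exp t := Real.add_one_lt_exp (ne_of_gt ht)
  -- multiply by exp(-t) > 0
  have h4 : (t + 1) * Real.exp (-t) < 1 := by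
    have hpos := Real.exp_pos (-t)
    have := mul_lt_mul_of_pos_right hkey hpos
    rwa [← Real.exp_add, add_neg_cancel, Real.exp_zero] at this
  rw [hE]
  constructor
  · have : 0 < z * (-L) * (1 - q) := by
      apply mul_pos (mul_pos hz (by linarith)) (by linarith)
    nlinarith
  · -- -(z*L*(1-q)) = (t/q)*(1-q), need t*(1-q) < q
    have h5 : t * (1 - q) < q := by nlinarith [hexp, h4]
    have hzL : z * L = -(t / q) := by
      field_simp [htdef]
      ring
    rw [hzL]
    have : (t / q) * (1 - q) < 1 := by
      rw [div_mul_eq_mul_div, div_lt_one hq0]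
      linarith
    nlinarith
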